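/- Let Y̅ be a closed salient W-invariant cone in V, and let α ∈ Y̅ be a nonzero eigenvector of w ∈ W with real eigenvalue λ. Then λ > 0, and if λ ≠ 1 the λ-eigenspace V_{w,λ} intersected with Y̅ is a totally isotropic subset of V (i.e., ⟨x,y⟩ = 0 for all x,y ∈ V_{w,λ} ∩ Y̅). -/

import Mathlib

open scoped BigOperators

/-- Nonnegative conical span of a subset of a real vector space. -/
def nnCone {V : Type*} [AddCommGroup V] [Module ℝ V] (Γ : Set V) : Set V :=
  { v | ∃ (s : Finset V) (c : V → ℝ), ↑s ⊆ Γ ∧ (∀ x ∈ s, 0 ≤ c x) ∧ v = ∑ x ∈ s, c x • x }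

/-- A based root system for a Coxeter system, in a real quadratic space. -/
structure BasedRootSystem (V : Type*) [AddCommGroup V] [Module ℝ V] where
  form : V →ₗ[ℝ] V →ₗ[ℝ] ℝ
  form_symm : ∀ u v, form u v = form v u
  simples : Set V
  posIndep : ∀ s : Finset V, ↑s ⊆ simples → ∀ c : V → ℝ,
      (∀ v ∈ s, 0 < c v) → ∑ v ∈ s, c v • v = 0 → s = ∅
  norm_one : ∀ α ∈ simples, form α α = 1
  pairing : ∀ α ∈ simples, ∀ β ∈ simples, α ≠ β →
      (∃ m : ℕ, 2 ≤ m ∧ form α β = -Real.cos (Real.pi / (m : ℝ))) ∨ form α β ≤ -1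

namespace BasedRootSystem

variable {V : Type*} [AddCommGroup V] [Module ℝ V]

/-- `g` is the reflection in the vector `α` (so `g v = v - ⟨v, α^∨⟩ α` with
`α^∨ = (2/⟨α,α⟩)α`). -/
def IsRefl (R : BasedRootSystem V) (α : V) (g : V ≃ₗ[ℝ] V) : Prop :=
  ∀ v, g v = v - ((2 / R.form α α) * R.form v α) • α

/-- The Coxeter group `W`, generated by the simple reflections. -/
def W (R : BasedRootSystem V) : Subgroup (V ≃ₗ[ℝ] V) :=
  Subgroup.closure { g | ∃ α ∈ R.simples, R.IsRefl α g }

/-- The reflection subgroup generated by reflections in the elements of `Δ`. -/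
def subW (R : BasedRootSystem V) (Δ : Set V) : Subgroup (V ≃ₗ[ℝ] V) :=
  Subgroup.closure { g | ∃ α ∈ Δ, R.IsRefl α g }

/-- The root system `Φ = WΠ`. -/
def roots (R : BasedRootSystem V) : Set V :=
  { β | ∃ w ∈ R.W, ∃ α ∈ R.simples, β = w α }

/-- The positive roots `Φ⁺ = Φ ∩ ℝ_{≥0}Π`. -/
def posRoots (R : BasedRootSystem V) : Set V := R.roots ∩ nnCone R.simples

/-- The fundamental chamber `𝒞`. -/
def chamber (R : BasedRootSystem V) : Set V := { v | ∀ α ∈ R.simples, 0 ≤ R.form v α }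

/-- `𝒦 = ℝ_{≥0}Π ∩ (−𝒞)`. -/
def K (R : BasedRootSystem V) : Set V :=
  nnCone R.simples ∩ { v | ∀ α ∈ R.simples, R.form v α ≤ 0 }

/-- The imaginary cone `𝒵 = ⋃_{w ∈ W} w(𝒦)`. -/
def imaginaryCone (R : BasedRootSystem V) : Set V :=
  { v | ∃ w ∈ R.W, ∃ k ∈ R.K, v = w k }

/-- The standard length function of `(W,S)`. -/
noncomputable def length (R : BasedRootSystem V) (w : V ≃ₗ[ℝ] V) : ℕ :=
  sInf { n | ∃ l : List (V ≃ₗ[ℝ] V), l.length = n ∧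
      (∀ g ∈ l, ∃ α ∈ R.simples, R.IsRefl α g) ∧ w = l.prod }

/-- Irreducibility of the Coxeter system: the Coxeter graph on `Π` is connected. -/
def Irred (R : BasedRootSystem V) : Prop :=
  ∀ A B : Set V, A ∪ B = R.simples → (∀ a ∈ A, ∀ b ∈ B, R.form a b = 0) →
    A = ∅ ∨ B = ∅

/-- `Δ` is a support of `v`: `v` is a strictly positive combination of `Δ ⊆ Π`. -/
def IsSupport (R : BasedRootSystem V) (Δ : Finset V) (v : V) : Prop :=
  ↑Δ ⊆ R.simples ∧ ∃ c : V → ℝ, (∀ x ∈ Δ, 0 < c x) ∧ v = ∑ x ∈ Δ, c x • x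

/-- `Δ` is connected in the Coxeter graph. -/
def ConnSubset (R : BasedRootSystem V) (Δ : Finset V) : Prop :=
  ∀ x ∈ Δ, ∀ y ∈ Δ, Relation.ReflTransGen
    (fun a b => a ∈ Δ ∧ b ∈ Δ ∧ R.form a b ≠ 0) x y

end BasedRootSystem

/-- Every element of `W` preserves the bilinear form. -/
lemma form_W_invariant {V : Type*} [AddCommGroup V] [Module ℝ V]
    (R : BasedRootSystem V) (g : V ≃ₗ[ℝ] V) (hg : g ∈ R.W) :
    ∀ u v, R.form (g u) (g v) = R.form u v := by
  induction hg using Subgroup.closure_induction with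
  | mem g hg =>
    obtain ⟨α, hα, hrefl⟩ := hg
    intro u v
    rw [hrefl u, hrefl v]
    have h1 : R.form α α = 1 := R.norm_one α hα
    simp only [map_sub, map_smul, LinearMap.sub_apply, LinearMap.smul_apply,
      smul_eq_mul, h1]
    rw [R.form_symm α v]
    ring
  | one => intro u v; simp
  | mul a b ha hb iha ihb =>
    intro u v
    simpa using (iha (b u) (b v)).trans (ihb u v)
  | inv a ha iha =>
    intro u v
    have hau : ∀ x, a (a⁻¹ x) = x := fun x => a.apply_symm_apply x
    have := iha (a⁻¹ u) (a⁻¹ v)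
    rw [hau, hau] at this
    exact this.symm

/-- if `Y` is a closed salient `W`-invariant cone and `α ∈ Y`
is a nonzero eigenvector of `w ∈ W` with real eigenvalue `λ`, then `λ > 0`,
and if `λ ≠ 1` then `V_{w,λ} ∩ Y` is totally isotropic. -/
theorem statement13 {V : Type*} [AddCommGroup V] [Module ℝ V]
    [TopologicalSpace V] [IsTopologicalAddGroup V] [ContinuousSMul ℝ V]
    [T2Space V] [FiniteDimensional ℝ V]
    (R : BasedRootSystem V)
    (Y : Set V) (hclosed : IsClosed Y) (hconv : Convex ℝ Y)
    (hcone : ∀ t : ℝ, 0 < t → ∀ y ∈ Y, t • y ∈ Y)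
    (hsalient : Y ∩ (-Y) = {0})
    (hWinv : ∀ g ∈ R.W, ∀ y ∈ Y, g y ∈ Y)
    (w : V ≃ₗ[ℝ] V) (hw : w ∈ R.W) (lam : ℝ)
    (α : V) (hαY : α ∈ Y) (hα0 : α ≠ 0) (heig : w α = lam • α) :
    0 < lam ∧ (lam ≠ 1 →
      ∀ u ∈ { v | w v = lam • v } ∩ Y, ∀ v ∈ { v | w v = lam • v } ∩ Y,
        R.form u v = 0) := by
  have key : ∀ μ : ℝ, ∀ β : V, β ∈ Y → β ≠ 0 → w β = μ • β → 0 < μ := by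
    intro μ β hβY hβ0 heq
    rcases lt_trichotomy μ 0 with hneg | hzero | hpos
    · exfalso
      have h1 : w β ∈ Y := hWinv w hw β hβY
      have h2 : (-μ) • β ∈ Y := hcone (-μ) (by linarith) β hβY
      have h3 : μ • β ∈ -Y := by
        rw [Set.mem_neg]; simpa [neg_smul] using h2
      have h4 : μ • β ∈ Y ∩ (-Y) := ⟨heq ▸ h1, h3⟩
      rw [hsalient] at h4
      have : β = 0 := by
        have := smul_eq_zero.mp (Set.mem_singleton_iff.mp h4)
        rcases this with h | h
        · exact absurd h (ne_of_lt hneg)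
        · exact h
      exact hβ0 this
    · exfalso
      subst hzero
      have : w β = 0 := by simpa using heq
      exact hβ0 (by simpa using w.injective (by simpa using this))
    · exact hpos
  have hlam : 0 < lam := key lam α hαY hα0 heig
  refine ⟨hlam, fun hne u hu v hv => ?_⟩
  obtain ⟨hu1, hu2⟩ := hu
  obtain ⟨hv1, hv2⟩ := hv
  have hpres := form_W_invariant R w hw u v
  rw [Set.mem_setOf_eq] at hu1 hv1
  rw [hu1, hv1] at hpres
  simp only [map_smul, LinearMap.smul_apply, smul_eq_mul] at hpres
  have : (lam * lam - 1) * R.form u v = 0 := by linarith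
  rcases mul_eq_zero.mp this with h | h
  · exfalso
    have : lam * lam = 1 := by linarith
    have : lam = 1 := by nlinarith
    exact hne this
  · exact h
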